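/- arXiv:1804.09014 — 5 statements merged into one kernel-verified Lean document; each statement's English description precedes it below -/
import Mathlib

section
/- Fix α ∈ (0,1). Define M_1 = log(p_1(X_1)/p_0(X_1)) and M_n = log(p_1(X_n)/p_0(X_n)) + max(0, M_{n−1}) for n ≥ 2, and let τ_ml^α = inf{n ≥ 1 : M_n ≥ log(1/α)} (the CUSUM stopping time). Assume μ_0 = ∫ log(p_0/p_1) p_0 and μ_1 = ∫ log(p_1/p_0) p_1 are finite and strictly positive. Then sup_{θ ∈ ℤ^+} P_θ(τ_ml^α < θ) = 1. -/
open MeasureTheory ProbabilityTheory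

/-- The CUSUM stopping time `τ_ml^α` does not control the false alarm
probability uniformly in the change point: `sup_{θ ≥ 1} P_θ(τ_ml^α < θ) = 1`. -/
theorem statement3
    {Ω : Type*} [MeasurableSpace Ω]
    {d : ℕ} (p0 p1 : (Fin d → ℝ) → ℝ)
    (hp0m : Measurable p0) (hp1m : Measurable p1)
    (hp0nn : ∀ x, 0 ≤ p0 x) (hp1nn : ∀ x, 0 ≤ p1 x)
    (hp0int : ∫ x, p0 x = 1) (hp1int : ∫ x, p1 x = 1)
    (hμ0int : Integrable (fun x => Real.log (p0 x / p1 x) * p0 x))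
    (hμ0pos : 0 < ∫ x, Real.log (p0 x / p1 x) * p0 x)
    (hμ1int : Integrable (fun x => Real.log (p1 x / p0 x) * p1 x))
    (hμ1pos : 0 < ∫ x, Real.log (p1 x / p0 x) * p1 x)
    (X : ℕ → Ω → (Fin d → ℝ)) (hXm : ∀ i, Measurable (X i))
    (P : ℕ → Measure Ω) (hP : ∀ θ, 1 ≤ θ → IsProbabilityMeasure (P θ))
    (hindep : ∀ θ, 1 ≤ θ → iIndepFun X (P θ))
    (hlaw0 : ∀ θ, 1 ≤ θ → ∀ i, 1 ≤ i → i < θ →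
      (P θ).map (X i) = volume.withDensity (fun x => ENNReal.ofReal (p0 x)))
    (hlaw1 : ∀ θ, 1 ≤ θ → ∀ i, θ ≤ i →
      (P θ).map (X i) = volume.withDensity (fun x => ENNReal.ofReal (p1 x)))
    (α : ℝ) (hα : α ∈ Set.Ioo (0 : ℝ) 1)
    (M : ℕ → Ω → ℝ)
    (hM1 : ∀ ω, M 1 ω = Real.log (p1 (X 1 ω) / p0 (X 1 ω)))
    (hMrec : ∀ n, 2 ≤ n → ∀ ω,
      M n ω = Real.log (p1 (X n ω) / p0 (X n ω)) + max 0 (M (n - 1) ω))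
    (τ : Ω → ℕ)
    (hτ : ∀ ω, τ ω = sInf {n | 1 ≤ n ∧ Real.log (1 / α) ≤ M n ω}) :
    (⨆ θ : ℕ, ⨆ _ : 1 ≤ θ, P θ {ω | 1 ≤ τ ω ∧ τ ω < θ}) = 1 := by
  classical
  set c : ℝ := Real.log (1 / α) with hcdef
  have hc : 0 < c := Real.log_pos (one_lt_one_div hα.1 hα.2)
  set L : (Fin d → ℝ) → ℝ := fun x => Real.log (p1 x / p0 x) with hLdef
  have hLm : Measurable L := (hp1m.div hp0m).log
  set ν0 : Measure (Fin d → ℝ) :=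
    volume.withDensity (fun x => ENNReal.ofReal (p0 x)) with hν0def
  -- Step A : ν0 {0 < L} ≠ 0
  have hA : ν0 {x | 0 < L x} ≠ 0 := by
    intro h0
    have hmeasL : MeasurableSet {x | 0 < L x} := measurableSet_lt measurable_const hLm
    rw [hν0def, withDensity_apply _ hmeasL] at h0
    have h0'' := (lintegral_eq_zero_iff (hp0m.ennreal_ofReal)).1 h0
    have h0' : ∀ᵐ x, x ∈ {x | 0 < L x} → ENNReal.ofReal (p0 x) = 0 :=
      (ae_restrict_iff' hmeasL).1 h0''
    have hle : ∀ᵐ x, L x * p1 x ≤ 0 := by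
      filter_upwards [h0'] with x hx
      rcases le_or_gt (L x) 0 with h | h
      · exact mul_nonpos_of_nonpos_of_nonneg h (hp1nn x)
      · exfalso
        have hp00 : p0 x = 0 := by
          have h1 := hx h
          have h2 := ENNReal.ofReal_eq_zero.1 h1
          linarith [hp0nn x]
        have : L x = 0 := by
          simp [hLdef, hp00, div_zero, Real.log_zero]
        linarith
    have : (∫ x, Real.log (p1 x / p0 x) * p1 x) ≤ 0 := by
      refine integral_nonpos_of_ae ?_
      filter_upwards [hle] with x hx
      simpa [hLdef] using hx
    linarith
  -- Step B : find δ > 0 with positive mass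
  obtain ⟨δ, hδpos, hq0⟩ : ∃ δ : ℝ, 0 < δ ∧ ν0 {x | δ ≤ L x} ≠ 0 := by
    by_contra h
    push_neg at h
    apply hA
    have hsub : {x | 0 < L x} ⊆ ⋃ n : ℕ, {x | 1 / (n + 1 : ℝ) ≤ L x} := by
      intro x hx
      obtain ⟨n, hn⟩ := exists_nat_one_div_lt (show (0 : ℝ) < L x from hx)
      exact Set.mem_iUnion.2 ⟨n, hn.le⟩
    refine measure_mono_null hsub (measure_iUnion_null fun n => ?_)
    exact h (1 / (n + 1 : ℝ)) (by positivity)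
  set S0 : Set (Fin d → ℝ) := {x | δ ≤ L x} with hS0def
  have hS0 : MeasurableSet S0 := measurableSet_le measurable_const hLm
  set q : ENNReal := ν0 S0 with hqdef
  -- block length, as an opaque natural number
  obtain ⟨m, hm1, hmδ⟩ : ∃ m : ℕ, 1 ≤ m ∧ c ≤ (m : ℝ) * δ := by
    refine ⟨max 1 ⌈c / δ⌉₊, le_max_left _ _, ?_⟩
    have h1 : c / δ ≤ (⌈c / δ⌉₊ : ℝ) := Nat.le_ceil _
    have h2 : (⌈c / δ⌉₊ : ℝ) ≤ ((max 1 ⌈c / δ⌉₊ : ℕ) : ℝ) := by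
      exact_mod_cast le_max_right _ _
    calc c = (c / δ) * δ := by field_simp
    _ ≤ ((max 1 ⌈c / δ⌉₊ : ℕ) : ℝ) * δ := by nlinarith
  -- deterministic block lemma (general offset `a`)
  have hblock : ∀ a : ℕ, ∀ ω : Ω,
      (∀ i, a + 1 ≤ i → i ≤ a + m → δ ≤ L (X i ω)) → c ≤ M (a + m) ω := by
    intro a ω hω
    have key : ∀ t : ℕ, 1 ≤ t → t ≤ m → (t : ℝ) * δ ≤ M (a + t) ω := by
      intro t
      induction t with
      | zero => intro h; omega
      | succ t ih =>
        intro _ htm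
        have hδL : δ ≤ L (X (a + (t + 1)) ω) := hω _ (by omega) (by omega)
        simp only [hLdef] at hδL
        rcases Nat.eq_zero_or_pos t with rfl | ht1
        · -- base case t + 1 = 1
          rcases Nat.eq_zero_or_pos a with rfl | hpos
          · rw [show (0 : ℕ) + (0 + 1) = 1 from rfl, hM1 ω]
            simp only [Nat.zero_add] at hδL
            push_cast
            have : δ ≤ Real.log (p1 (X 1 ω) / p0 (X 1 ω)) := by
              convert hδL using 3 <;> norm_num
            linarith
          · have h2 : 2 ≤ a + (0 + 1) := by omega
            rw [hMrec _ h2 ω]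
            push_cast
            have hδL' : δ ≤ Real.log (p1 (X (a + 1) ω) / p0 (X (a + 1) ω)) := by
              simpa using hδL
            have hmax := le_max_left (0 : ℝ) (M a ω)
            linarith
        · have hprev : (t : ℝ) * δ ≤ M (a + t) ω := ih ht1 (by omega)
          have h2 : 2 ≤ a + (t + 1) := by omega
          rw [hMrec _ h2 ω, show a + (t + 1) - 1 = a + t from by omega]
          have hmax : (t : ℝ) * δ ≤ max 0 (M (a + t) ω) :=
            hprev.trans (le_max_right _ _)
          push_cast
          nlinarith
    have hfin := key m hm1 le_rfl
    linarith
  -- arithmetic helper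
  have hjK : ∀ j K : ℕ, j < K → j * m + m ≤ K * m := by
    intro j K hj
    have h := Nat.mul_le_mul_right m (Nat.succ_le_of_lt hj)
    rwa [Nat.succ_mul] at h
  -- main quantitative bound for each K
  have hmain : ∀ K : ℕ,
      1 - (1 - q ^ m) ^ K ≤ ⨆ θ : ℕ, ⨆ _ : 1 ≤ θ, P θ {ω | 1 ≤ τ ω ∧ τ ω < θ} := by
    intro K
    set θ : ℕ := K * m + 1 with hθdef
    have hθ1 : 1 ≤ θ := Nat.le_add_left 1 _
    haveI : IsProbabilityMeasure (P θ) := hP θ hθ1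
    set B : ℕ → Set Ω := fun j => ⋂ i ∈ Finset.Icc (j * m + 1) (j * m + m), X i ⁻¹' S0
      with hBdef
    have hmeasB : ∀ j, MeasurableSet (B j) :=
      fun j => Finset.measurableSet_biInter _ fun i _ => (hXm i) hS0
    -- P θ (B j) = q ^ m for j < K
    have hPB : ∀ j, j < K → P θ (B j) = q ^ m := by
      intro j hj
      have hprod := (hindep θ hθ1).meas_biInter
        (S := Finset.Icc (j * m + 1) (j * m + m)) (s := fun i => X i ⁻¹' S0)
        (fun i _ => ⟨S0, hS0, rfl⟩)
      rw [hBdef]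
      rw [hprod]
      have hfac : ∀ i ∈ Finset.Icc (j * m + 1) (j * m + m), P θ (X i ⁻¹' S0) = q := by
        intro i hi
        rw [Finset.mem_Icc] at hi
        have h1i : 1 ≤ i := le_trans (Nat.le_add_left 1 _) hi.1
        have hiθ : i < θ := by
          rw [hθdef]
          exact Nat.lt_succ_of_le (hi.2.trans (hjK j K hj))
        rw [← Measure.map_apply (hXm i) hS0, hlaw0 θ hθ1 i h1i hiθ, hqdef, hν0def]
      rw [Finset.prod_congr rfl hfac, Finset.prod_const, Nat.card_Icc]
      congr 1
      omega
    -- independence induction: P θ (⋂_{j<k} B jᶜ) = (1 - q^m)^k for k ≤ K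
    have hD : ∀ k, k ≤ K → P θ (⋂ j ∈ Finset.range k, (B j)ᶜ) = (1 - q ^ m) ^ k := by
      intro k
      induction k with
      | zero => intro _; simp
      | succ k ih =>
        intro hk
        have hkK : k < K := hk
        have ihk := ih (le_of_lt hkK)
        set Sf : Finset ℕ := Finset.Icc 1 (k * m) with hSfdef
        set Tf : Finset ℕ := Finset.Icc (k * m + 1) (k * m + m) with hTfdef
        have hdisj : Disjoint Sf Tf := by
          rw [Finset.disjoint_left]
          intro x hx hy
          rw [hSfdef, Finset.mem_Icc] at hx
          rw [hTfdef, Finset.mem_Icc] at hy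
          exact absurd (lt_of_le_of_lt hx.2 (lt_of_lt_of_le (Nat.lt_succ_self _) hy.1))
            (lt_irrefl x)
        have hIF := (hindep θ hθ1).indepFun_finset Sf Tf hdisj hXm
        set gS : Ω → (Sf → (Fin d → ℝ)) := fun ω i => X i ω with hgSdef
        set gT : Ω → (Tf → (Fin d → ℝ)) := fun ω i => X i ω with hgTdef
        set AS : Set (Sf → (Fin d → ℝ)) :=
          ⋂ j ∈ Finset.range k,
            {v | ∀ i : Sf, (i : ℕ) ∈ Finset.Icc (j * m + 1) (j * m + m) → v i ∈ S0}ᶜ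
          with hASdef
        set AT : Set (Tf → (Fin d → ℝ)) := {v | ∀ i : Tf, v i ∈ S0} with hATdef
        have hASmeas : MeasurableSet AS := by
          refine Finset.measurableSet_biInter _ fun j _ => (MeasurableSet.compl ?_)
          have hrw : {v : Sf → (Fin d → ℝ) |
              ∀ i : Sf, (i : ℕ) ∈ Finset.Icc (j * m + 1) (j * m + m) → v i ∈ S0}
              = ⋂ i : Sf, {v : Sf → (Fin d → ℝ) |
                  (i : ℕ) ∈ Finset.Icc (j * m + 1) (j * m + m) → v i ∈ S0} := by
            ext v; simp
          rw [hrw]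
          refine MeasurableSet.iInter fun i => ?_
          by_cases hi : (i : ℕ) ∈ Finset.Icc (j * m + 1) (j * m + m)
          · simp only [hi, forall_true_left]
            exact (measurable_pi_apply i) hS0
          · simp [hi]
        have hATmeas : MeasurableSet AT := by
          have hrw : AT = ⋂ i : Tf, {v : Tf → (Fin d → ℝ) | v i ∈ S0} := by
            ext v; simp [hATdef]
          rw [hrw]
          exact MeasurableSet.iInter fun i => (measurable_pi_apply i) hS0
        have hrepS : gS ⁻¹' AS = ⋂ j ∈ Finset.range k, (B j)ᶜ := by
          rw [hASdef]
          simp only [Set.preimage_iInter]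
          refine Set.iInter₂_congr fun j hj => ?_
          rw [Finset.mem_range] at hj
          rw [Set.preimage_compl]
          congr 1
          ext ω
          simp only [Set.mem_preimage, Set.mem_setOf_eq, hBdef, Set.mem_iInter, hgSdef]
          constructor
          · intro h i hi
            have hi' := Finset.mem_Icc.1 hi
            have hiS : i ∈ Sf := by
              rw [hSfdef, Finset.mem_Icc]
              exact ⟨le_trans (Nat.le_add_left 1 _) hi'.1, hi'.2.trans (hjK j k hj)⟩
            exact h ⟨i, hiS⟩ hi
          · intro h i hi
            exact h (i : ℕ) hi
        have hrepT : gT ⁻¹' AT = B k := by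
          ext ω
          simp only [Set.mem_preimage, hATdef, Set.mem_setOf_eq, hBdef, Set.mem_iInter,
            hgTdef]
          constructor
          · intro h i hi
            exact h ⟨i, hi⟩
          · intro h i
            exact h (i : ℕ) i.2
        rw [show Finset.range (k + 1) = insert k (Finset.range k) from Finset.range_add_one]
        rw [Finset.set_biInter_insert]
        have hcomm : (B k)ᶜ ∩ ⋂ j ∈ Finset.range k, (B j)ᶜ
            = gS ⁻¹' AS ∩ gT ⁻¹' ATᶜ := by
          rw [hrepS, Set.preimage_compl, hrepT, Set.inter_comm]
        rw [hcomm]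
        rw [hIF.measure_inter_preimage_eq_mul _ _ hASmeas hATmeas.compl]
        rw [hrepS, ihk]
        have hend : P θ (gT ⁻¹' ATᶜ) = 1 - q ^ m := by
          rw [Set.preimage_compl, hrepT, prob_compl_eq_one_sub (hmeasB k), hPB k hkK]
        rw [hend, pow_succ]
    -- union of blocks is inside the target event
    have hBsub : ∀ j, j < K → B j ⊆ {ω | 1 ≤ τ ω ∧ τ ω < θ} := by
      intro j hj ω hω
      simp only [hBdef, Set.mem_iInter, Set.mem_preimage] at hω
      have hcM : c ≤ M (j * m + m) ω := by
        apply hblock (j * m) ω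
        intro i h1 h2
        exact hω i (Finset.mem_Icc.2 ⟨h1, h2⟩)
      have hmem : (j * m + m) ∈ {n | 1 ≤ n ∧ c ≤ M n ω} :=
        ⟨le_trans hm1 (Nat.le_add_left m _), hcM⟩
      have hne : {n | 1 ≤ n ∧ c ≤ M n ω}.Nonempty := ⟨_, hmem⟩
      constructor
      · have hsmem := Nat.sInf_mem hne
        rw [hτ ω]
        exact hsmem.1
      · rw [hτ ω]
        calc sInf {n | 1 ≤ n ∧ c ≤ M n ω} ≤ j * m + m := Nat.sInf_le hmem
        _ < θ := by
          rw [hθdef]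
          exact Nat.lt_succ_of_le (hjK j K hj)
    -- lower bound on the union
    have hunion : 1 - (1 - q ^ m) ^ K ≤ P θ (⋃ j ∈ Finset.range K, B j) := by
      have hcover : (Set.univ : Set Ω) ⊆
          (⋃ j ∈ Finset.range K, B j) ∪ (⋂ j ∈ Finset.range K, (B j)ᶜ) := by
        intro ω _
        by_cases h : ω ∈ ⋃ j ∈ Finset.range K, B j
        · exact Or.inl h
        · refine Or.inr ?_
          simp only [Set.mem_iUnion, not_exists] at h
          simp only [Set.mem_iInter, Set.mem_compl_iff]
          intro j hj
          exact h j hj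
      have h1 : (1 : ENNReal) ≤ P θ (⋃ j ∈ Finset.range K, B j)
          + P θ (⋂ j ∈ Finset.range K, (B j)ᶜ) := by
        calc (1 : ENNReal) = P θ Set.univ := (measure_univ).symm
        _ ≤ P θ ((⋃ j ∈ Finset.range K, B j) ∪ (⋂ j ∈ Finset.range K, (B j)ᶜ)) :=
          measure_mono hcover
        _ ≤ _ := measure_union_le _ _
      rw [hD K le_rfl] at h1
      exact tsub_le_iff_right.2 h1
    calc 1 - (1 - q ^ m) ^ K ≤ P θ (⋃ j ∈ Finset.range K, B j) := hunion
    _ ≤ P θ {ω | 1 ≤ τ ω ∧ τ ω < θ} := by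
        apply measure_mono
        exact Set.iUnion₂_subset fun j hj => hBsub j (Finset.mem_range.1 hj)
    _ ≤ ⨆ θ' : ℕ, ⨆ _ : 1 ≤ θ', P θ' {ω | 1 ≤ τ ω ∧ τ ω < θ'} :=
        le_iSup_of_le θ (le_iSup_of_le hθ1 le_rfl)
  -- conclude
  have hub : (⨆ θ : ℕ, ⨆ _ : 1 ≤ θ, P θ {ω | 1 ≤ τ ω ∧ τ ω < θ}) ≤ 1 := by
    refine iSup_le fun θ => iSup_le fun hθ => ?_
    haveI := hP θ hθ
    exact prob_le_one
  refine le_antisymm hub ?_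
  have hr0 : q ^ m ≠ 0 := pow_ne_zero _ hq0
  have hlt1 : 1 - q ^ m < 1 := ENNReal.sub_lt_self ENNReal.one_ne_top one_ne_zero hr0
  have htend : Filter.Tendsto (fun K : ℕ => 1 - (1 - q ^ m) ^ K)
      Filter.atTop (nhds 1) := by
    have h0 : Filter.Tendsto (fun K : ℕ => (1 - q ^ m) ^ K) Filter.atTop (nhds 0) :=
      ENNReal.tendsto_pow_atTop_nhds_zero_of_lt_one hlt1
    have hsub := ENNReal.Tendsto.sub
      (tendsto_const_nhds : Filter.Tendsto (fun _ : ℕ => (1 : ENNReal)) Filter.atTop _)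
      h0 (Or.inl ENNReal.one_ne_top)
    simpa using hsub
  exact le_of_tendsto htend (Filter.Eventually.of_forall hmain)
end

section
/- For any ε ∈ (0,1), any integer m ≥ 1, and any x > −log(1 − 0.2075/2), if e_1, e_2, ... are i.i.d. standard exponential random variables then P( max_{k ∈ ℤ^+} [e_k − b_{m,ε}(k)] ≥ x ) ≤ 1 − exp{ −e^{−x} ( ε^{−1} + e^{−x} ) }. -/
open MeasureTheory ProbabilityTheory

/-- The iterated logarithm functions: `Phi 0 x = x`, `Phi (m+1) x = 1 + log (Phi m x)`,
so that `Phi 1 x = φ(x) = 1 + log x` and `Phi m = φ(Phi (m−1))`. -/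
noncomputable def Phi : ℕ → ℝ → ℝ
  | 0, x => x
  | m + 1, x => 1 + Real.log (Phi m x)

/-- The boundary `b_{m,ε}(x) = −log [1/(ε Φ_m(x)^ε) − 1/(ε Φ_m(x+1)^ε)]`. -/
noncomputable def bfun (m : ℕ) (ε : ℝ) (x : ℝ) : ℝ :=
  -Real.log (1 / (ε * Phi m x ^ ε) - 1 / (ε * Phi m (x + 1) ^ ε))

lemma Phi_one_le : ∀ (m : ℕ) {x : ℝ}, 1 ≤ x → 1 ≤ Phi m x
  | 0, x, hx => hx
  | m + 1, x, hx => by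
    have h := Phi_one_le m hx
    simp only [Phi]
    nlinarith [Real.log_nonneg h]

lemma Phi_pos (m : ℕ) {x : ℝ} (hx : 1 ≤ x) : 0 < Phi m x :=
  lt_of_lt_of_le one_pos (Phi_one_le m hx)

lemma Phi_lt_Phi : ∀ (m : ℕ) {x y : ℝ}, 1 ≤ x → x < y → Phi m x < Phi m y
  | 0, x, y, _, hxy => hxy
  | m + 1, x, y, hx, hxy => by
    have h := Phi_lt_Phi m hx hxy
    simp only [Phi]
    have := Real.log_lt_log (Phi_pos m hx) h
    linarith

lemma Phi_at_one : ∀ m : ℕ, Phi m 1 = 1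
  | 0 => rfl
  | m + 1 => by simp [Phi, Phi_at_one m]

/-- increments of `Phi` shrink with `m`. -/
lemma Phi_inc_le : ∀ (m : ℕ) {x y : ℝ}, 1 ≤ x → x ≤ y →
    Phi (m + 1) y - Phi (m + 1) x ≤ (Phi m y - Phi m x) / Phi m x := by
  intro m x y hx hxy
  have hpx := Phi_pos m hx
  have hpy : 0 < Phi m y := lt_of_lt_of_le hpx (by
    rcases eq_or_lt_of_le hxy with h | h
    · simp [h]
    · exact (Phi_lt_Phi m hx h).le)
  simp only [Phi]
  have h1 : Real.log (Phi m y) - Real.log (Phi m x) = Real.log (Phi m y / Phi m x) := by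
    rw [Real.log_div hpy.ne' hpx.ne']
  have h2 : Real.log (Phi m y / Phi m x) ≤ Phi m y / Phi m x - 1 :=
    Real.log_le_sub_one_of_pos (by positivity)
  have h3 : Phi m y / Phi m x - 1 = (Phi m y - Phi m x) / Phi m x := by
    field_simp
  linarith [h1, h2, h3.symm ▸ h2]

lemma Phi_le_Phi (m : ℕ) {x y : ℝ} (hx : 1 ≤ x) (hxy : x ≤ y) : Phi m x ≤ Phi m y := by
  rcases eq_or_lt_of_le hxy with h | h
  · simp [h]
  · exact (Phi_lt_Phi m hx h).le

/-- increments are weakly decreasing in m -/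
lemma Phi_inc_mono : ∀ (m : ℕ) {x y : ℝ}, 1 ≤ x → x ≤ y →
    Phi (m + 1) y - Phi (m + 1) x ≤ Phi m y - Phi m x := by
  intro m x y hx hxy
  have h1 := Phi_inc_le m hx hxy
  have h2 : 1 ≤ Phi m x := Phi_one_le m hx
  have h3 : Phi m x ≤ Phi m y := Phi_le_Phi m hx hxy
  calc Phi (m + 1) y - Phi (m + 1) x ≤ (Phi m y - Phi m x) / Phi m x := h1
    _ ≤ (Phi m y - Phi m x) / 1 := by
        apply div_le_div_of_nonneg_left (by linarith) one_pos h2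
    _ = Phi m y - Phi m x := by ring
  -- handle the middle step sign: Phi m y - Phi m x ≥ 0

lemma Phi_inc_le_of_le : ∀ (m n : ℕ), n ≤ m → ∀ {x y : ℝ}, 1 ≤ x → x ≤ y →
    Phi m y - Phi m x ≤ Phi n y - Phi n x := by
  intro m
  induction m with
  | zero => intro n hn x y hx hxy; interval_cases n; exact le_refl _
  | succ m ih =>
    intro n hn x y hx hxy
    rcases Nat.lt_or_ge n (m+1) with h | h
    · exact le_trans (Phi_inc_mono m hx hxy) (ih n (Nat.lt_succ_iff.mp h) hx hxy)
    · have : n = m + 1 := le_antisymm hn h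
      simp [this]

/-- Phi m 2 ≤ 1 + log 2 for m ≥ 1 -/
lemma Phi_two_le : ∀ (m : ℕ), 1 ≤ m → Phi m 2 ≤ 1 + Real.log 2 := by
  intro m
  induction m with
  | zero => omega
  | succ m ih =>
    intro _
    rcases Nat.eq_zero_or_pos m with h | h
    · subst h; simp [Phi]
    · have h1 := ih h
      have h2 : 1 ≤ Phi m 2 := Phi_one_le m (by norm_num)
      have h3 : Real.log (Phi m 2) ≤ Phi m 2 - 1 :=
        Real.log_le_sub_one_of_pos (by linarith)
      have h4 : Phi m 2 ≤ 1 + Real.log 2 := h1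
      show 1 + Real.log (Phi m 2) ≤ 1 + Real.log 2
      have h5 : Real.log (Phi m 2) ≤ Real.log (1 + Real.log 2) := by
        apply Real.log_le_log (by linarith)
        exact h4
      have h6 : Real.log (1 + Real.log 2) ≤ Real.log 2 := by
        apply Real.log_le_log (by positivity)
        nlinarith [Real.log_le_sub_one_of_pos (two_pos (α := ℝ))]
      linarith

lemma log_le_half (q : ℝ) (hq : 1 ≤ q) : Real.log q ≤ (q - q⁻¹) / 2 := by
  have h0 : 0 < q := by linarith
  have h1 : 0 ≤ Real.log q := Real.log_nonneg hq
  have h2 : Real.log q ≤ Real.sinh (Real.log q) := Real.self_le_sinh_iff.mpr h1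
  rwa [Real.sinh_log h0] at h2

lemma exp_le_one_sub {p : ℝ} (h0 : 0 ≤ p) (h1 : p ≤ 1/2) :
    Real.exp (-(p + p^2)) ≤ 1 - p := by
  have hp : 0 < 1 - p := by linarith
  have h2 : Real.log (1-p)⁻¹ ≤ ((1-p)⁻¹ - ((1-p)⁻¹)⁻¹)/2 :=
    log_le_half _ (one_le_inv_iff₀.mpr ⟨hp, by linarith⟩)
  rw [inv_inv, Real.log_inv] at h2
  have h3 : ((1-p)⁻¹ - (1-p))/2 ≤ p + p^2 := by
    rw [div_le_iff₀ (by norm_num : (0:ℝ) < 2), sub_le_iff_le_add, inv_le_iff_one_le_mul₀ hp] at *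
    nlinarith
  have h4 : -(p + p^2) ≤ Real.log (1-p) := by linarith
  calc Real.exp (-(p+p^2)) ≤ Real.exp (Real.log (1-p)) := Real.exp_le_exp.mpr h4
    _ = 1 - p := Real.exp_log hp

lemma log2_lt : Real.log 2 < 0.6931471808 := Real.log_two_lt_d9
lemma log2_gt : 0.6931471803 < Real.log 2 := Real.log_two_gt_d9

lemma num1 : Real.log (1 + Real.log 2) ≤ 0.5513 := by
  have h1 := Real.log_two_lt_d9
  have h2 := Real.log_two_gt_d9
  have key := log_le_half (1 + Real.log 2) (by linarith)
  have hq : (1.6931471803:ℝ) < 1 + Real.log 2 := by linarith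
  have hinv : (0.5906:ℝ) ≤ (1 + Real.log 2)⁻¹ := by
    rw [le_inv_comm₀ (by norm_num) (by linarith)]
    nlinarith
  nlinarith

noncomputable def dfun (m : ℕ) (ε : ℝ) (t : ℝ) : ℝ :=
  1 / (ε * Phi m t ^ ε) - 1 / (ε * Phi m (t + 1) ^ ε)

lemma bfun_eq (m : ℕ) (ε t : ℝ) : bfun m ε t = -Real.log (dfun m ε t) := rfl

lemma dfun_pos {m : ℕ} {ε : ℝ} (hε : 0 < ε) {t : ℝ} (ht : 1 ≤ t) :
    0 < dfun m ε t := by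
  have h1 : (1:ℝ) ≤ Phi m t := Phi_one_le m ht
  have h2 : Phi m t < Phi m (t + 1) := Phi_lt_Phi m ht (by linarith)
  have h3 : Phi m t ^ ε < Phi m (t + 1) ^ ε :=
    Real.rpow_lt_rpow (by linarith) h2 hε
  have h4 : 0 < Phi m t ^ ε := Real.rpow_pos_of_pos (by linarith) ε
  have h5 : 0 < Phi m (t+1) ^ ε := Real.rpow_pos_of_pos (by linarith) ε
  have : 1 / (ε * Phi m (t+1) ^ ε) < 1 / (ε * Phi m t ^ ε) := by
    apply one_div_lt_one_div_of_lt (by positivity)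
    exact mul_lt_mul_of_pos_left h3 hε
  unfold dfun; linarith

lemma exp_neg_bfun {m : ℕ} {ε : ℝ} (hε : 0 < ε) {t : ℝ} (ht : 1 ≤ t) :
    Real.exp (-bfun m ε t) = dfun m ε t := by
  rw [bfun_eq, neg_neg, Real.exp_log (dfun_pos hε ht)]

/-- key upper bound: `dfun m ε t ≤ Phi (m+1) (t+1) - Phi (m+1) t`. -/
lemma dfun_le_inc {m : ℕ} {ε : ℝ} (hε : 0 < ε) (hε1 : ε ≤ 1) {t : ℝ} (ht : 1 ≤ t) :
    dfun m ε t ≤ Phi (m + 1) (t + 1) - Phi (m + 1) t := by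
  have h1 : (1:ℝ) ≤ Phi m t := Phi_one_le m ht
  have h2 : Phi m t ≤ Phi m (t + 1) := Phi_le_Phi m ht (by linarith)
  set a := Phi m t
  set b := Phi m (t + 1)
  have ha : 0 < a := by linarith
  have hb : 0 < b := by linarith
  have hla : 0 ≤ Real.log a := Real.log_nonneg h1
  have hlab : Real.log a ≤ Real.log b := Real.log_le_log ha h2
  have hae : a ^ ε = Real.exp (ε * Real.log a) := by
    rw [Real.rpow_def_of_pos ha, mul_comm]
  have hbe : b ^ ε = Real.exp (ε * Real.log b) := by
    rw [Real.rpow_def_of_pos hb, mul_comm]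
  have hR : Phi (m+1) (t+1) - Phi (m+1) t = Real.log b - Real.log a := by
    simp only [Phi]; ring
  rw [hR]
  unfold dfun
  rw [hae, hbe]
  set u := ε * Real.log a with hu_def
  set v := ε * Real.log b with hv_def
  have hu : 0 ≤ u := mul_nonneg hε.le hla
  have hL : 0 ≤ Real.log b - Real.log a := by linarith
  have h1e : (1:ℝ) ≤ Real.exp u := by
    rw [← Real.exp_zero]; exact Real.exp_le_exp.mpr hu
  have e1 : 1/(ε * Real.exp u) - 1/(ε * Real.exp v) = (1 - Real.exp (u - v))/(ε * Real.exp u) := by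
    rw [Real.exp_sub]
    field_simp
  have e2 : 1 - Real.exp (u - v) ≤ v - u := by
    nlinarith [Real.add_one_le_exp (u - v)]
  have hvu : v - u = ε * (Real.log b - Real.log a) := by rw [hu_def, hv_def]; ring
  rw [e1]
  calc (1 - Real.exp (u - v))/(ε * Real.exp u) ≤ (v - u)/(ε * Real.exp u) := by
        apply div_le_div_of_nonneg_right e2 (by positivity) |>.trans_eq rfl
    _ = (Real.log b - Real.log a) / Real.exp u := by rw [hvu]; field_simp
    _ ≤ (Real.log b - Real.log a) / 1 := by
        apply div_le_div_of_nonneg_left hL one_pos h1e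
    _ = Real.log b - Real.log a := by ring

lemma dfun_one_bound {m : ℕ} (hm : 1 ≤ m) {ε : ℝ} (hε : 0 < ε) (hε1 : ε ≤ 1) :
    dfun m ε 1 ≤ 0.5513 := by
  have h1 := dfun_le_inc (m := m) hε hε1 (le_refl (1:ℝ))
  have h2 : Phi (m+1) (1+1) - Phi (m+1) 1 = Real.log (Phi m 2) := by
    rw [Phi_at_one]
    norm_num [Phi]
  have h3 : Real.log (Phi m 2) ≤ Real.log (1 + Real.log 2) := by
    apply Real.log_le_log (Phi_pos m (by norm_num)) (Phi_two_le m hm)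
  calc dfun m ε 1 ≤ Real.log (Phi m 2) := by rw [← h2]; exact h1
    _ ≤ Real.log (1 + Real.log 2) := h3
    _ ≤ 0.5513 := num1

lemma dfun_big_bound {m : ℕ} (hm : 1 ≤ m) {ε : ℝ} (hε : 0 < ε) (hε1 : ε ≤ 1)
    {t : ℝ} (ht : 2 ≤ t) : dfun m ε t ≤ 1 / (t * (1 + Real.log 2)) := by
  have ht1 : (1:ℝ) ≤ t := by linarith
  have h1 := dfun_le_inc (m := m) hε hε1 ht1
  have h2 : Phi (m+1) (t+1) - Phi (m+1) t ≤ Phi 2 (t+1) - Phi 2 t :=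
    Phi_inc_le_of_le (m+1) 2 (by omega) ht1 (by linarith)
  have h3 : Phi 2 (t+1) - Phi 2 t ≤ (Phi 1 (t+1) - Phi 1 t) / Phi 1 t :=
    Phi_inc_le 1 ht1 (by linarith)
  have h4 : Phi 1 (t+1) - Phi 1 t = Real.log (t+1) - Real.log t := by
    simp [Phi]
  have h5 : Real.log (t+1) - Real.log t ≤ 1 / t := by
    rw [← Real.log_div (by linarith) (by linarith)]
    have := Real.log_le_sub_one_of_pos (show (0:ℝ) < (t+1)/t by positivity)
    have ht0 : (0:ℝ) < t := by linarith
    rw [div_sub_one ht0.ne'] at this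
    simpa [one_div] using this.trans_eq (by ring)
  have h6 : 1 + Real.log 2 ≤ Phi 1 t := by
    simp only [Phi]
    have := Real.log_le_log (by norm_num : (0:ℝ) < 2) ht
    linarith
  have hpos : (0:ℝ) < 1 + Real.log 2 := by positivity
  have h7 : (Phi 1 (t+1) - Phi 1 t) / Phi 1 t ≤ (1/t) / (1 + Real.log 2) := by
    apply div_le_div₀ (by positivity) (by rw [h4]; exact h5) hpos h6
  have h8 : (1/t) / (1 + Real.log 2) = 1 / (t * (1 + Real.log 2)) := by
    field_simp
  linarith

/-- telescoping sum bound -/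
lemma sum_dfun_le {m : ℕ} {ε : ℝ} (hε : 0 < ε) (n : ℕ) :
    ∑ i ∈ Finset.range n, dfun m ε ((i : ℝ) + 1) ≤ 1 / ε := by
  have key : ∀ i : ℕ, dfun m ε ((i : ℝ) + 1) =
      (fun j : ℕ => 1 / (ε * Phi m ((j : ℝ) + 1) ^ ε)) i -
      (fun j : ℕ => 1 / (ε * Phi m ((j : ℝ) + 1) ^ ε)) (i + 1) := by
    intro i
    simp only [dfun]
    push_cast
    ring_nf
  calc ∑ i ∈ Finset.range n, dfun m ε ((i : ℝ) + 1)
      = ∑ i ∈ Finset.range n, ((fun j : ℕ => 1 / (ε * Phi m ((j : ℝ) + 1) ^ ε)) i -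
        (fun j : ℕ => 1 / (ε * Phi m ((j : ℝ) + 1) ^ ε)) (i + 1)) := by
        exact Finset.sum_congr rfl (fun i _ => key i)
    _ = 1 / (ε * Phi m ((0 : ℝ) + 1) ^ ε) - 1 / (ε * Phi m ((n : ℝ) + 1) ^ ε) := by
        rw [Finset.sum_range_sub' (fun j : ℕ => 1 / (ε * Phi m ((j : ℝ) + 1) ^ ε)) n]
        norm_num
    _ ≤ 1 / ε := by
        have h1 : Phi m ((0:ℝ) + 1) = 1 := by norm_num [Phi_at_one]
        have h2 : (0:ℝ) < Phi m ((n:ℝ) + 1) := Phi_pos m (by have : (0:ℝ) ≤ (n:ℝ) := Nat.cast_nonneg n; linarith)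
        have h3 : (0:ℝ) < Phi m ((n:ℝ)+1) ^ ε := Real.rpow_pos_of_pos h2 ε
        rw [h1, Real.one_rpow]
        have : 0 ≤ 1 / (ε * Phi m ((n:ℝ)+1) ^ ε) := by positivity
        simp only [mul_one]
        linarith

lemma sum_dfun_sq_le {m : ℕ} (hm : 1 ≤ m) {ε : ℝ} (hε : 0 < ε) (hε1 : ε ≤ 1) (n : ℕ) :
    ∑ i ∈ Finset.range n, (dfun m ε ((i : ℝ) + 1))^2 ≤ 0.66 := by
  have hc : (0:ℝ) < 1 + Real.log 2 := by positivity
  have hcge : (1.6931:ℝ) ≤ 1 + Real.log 2 := by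
    have := Real.log_two_gt_d9; linarith
  set c : ℝ := 1 / (1 + Real.log 2)^2 with hc_def
  have hcle : c ≤ 0.34891 := by
    rw [hc_def, div_le_iff₀ (by positivity)]
    nlinarith
  have hc0 : 0 < c := by positivity
  cases n with
  | zero => norm_num
  | succ n =>
    rw [Finset.sum_range_succ']
    have hfirst : (dfun m ε (((0:ℕ) : ℝ) + 1))^2 ≤ 0.30394 := by
      have hb := dfun_one_bound hm hε hε1
      have hp := dfun_pos (m := m) hε (le_refl (1:ℝ))
      have : dfun m ε (((0:ℕ):ℝ) + 1) = dfun m ε 1 := by norm_num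
      rw [this]
      nlinarith
    have hrest : ∑ i ∈ Finset.range n, (dfun m ε (((i+1:ℕ) : ℝ) + 1))^2 ≤ c := by
      have hterm : ∀ i : ℕ, (dfun m ε (((i+1:ℕ) : ℝ) + 1))^2 ≤
          (fun j : ℕ => c / ((j:ℝ) + 1)) i - (fun j : ℕ => c / ((j:ℝ) + 1)) (i + 1) := by
        intro i
        have hi0 : (0:ℝ) ≤ (i:ℝ) := Nat.cast_nonneg i
        have ht : (2:ℝ) ≤ ((i+1:ℕ):ℝ) + 1 := by push_cast; linarith
        have hb := dfun_big_bound hm hε hε1 ht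
        have hp := dfun_pos (m := m) hε (by linarith : (1:ℝ) ≤ ((i+1:ℕ):ℝ) + 1)
        have ht0 : (0:ℝ) < ((i+1:ℕ):ℝ) + 1 := by linarith
        have hsq : (dfun m ε (((i+1:ℕ):ℝ) + 1))^2 ≤ (1 / ((((i+1:ℕ):ℝ)+1) * (1 + Real.log 2)))^2 := by
          nlinarith [hb, hp.le]
        have hineq : (1 / ((((i+1:ℕ):ℝ)+1) * (1 + Real.log 2)))^2 ≤
            c / ((i:ℝ) + 1) - c / (((i+1:ℕ):ℝ) + 1) := by
          push_cast
          have e1 : c / ((i:ℝ)+1) - c / ((i:ℝ)+1+1) = c / (((i:ℝ)+1)*((i:ℝ)+2)) := by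
            rw [hc_def]; field_simp; ring
          have e2 : (1 / (((i:ℝ)+1+1) * (1 + Real.log 2)))^2 = c / (((i:ℝ)+2)^2) := by
            rw [hc_def]; field_simp; ring
          rw [e1, e2]
          apply div_le_div_of_nonneg_left hc0.le (by nlinarith) (by nlinarith)
        calc (dfun m ε (((i+1:ℕ):ℝ) + 1))^2 ≤ (1 / ((((i+1:ℕ):ℝ)+1) * (1 + Real.log 2)))^2 := hsq
          _ ≤ (fun j : ℕ => c / ((j:ℝ) + 1)) i - (fun j : ℕ => c / ((j:ℝ) + 1)) (i + 1) := by
              simpa using hineq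
      calc ∑ i ∈ Finset.range n, (dfun m ε (((i+1:ℕ) : ℝ) + 1))^2
          ≤ ∑ i ∈ Finset.range n, ((fun j : ℕ => c / ((j:ℝ) + 1)) i - (fun j : ℕ => c / ((j:ℝ) + 1)) (i + 1)) :=
            Finset.sum_le_sum (fun i _ => hterm i)
        _ = c / ((0:ℝ) + 1) - c / ((n:ℝ) + 1) := by
            rw [Finset.sum_range_sub' (fun j : ℕ => c / ((j:ℝ) + 1)) n]; norm_num
        _ ≤ c := by
            have : 0 ≤ c / ((n:ℝ)+1) := by positivity
            norm_num; linarith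
    push_cast at hfirst hrest ⊢
    linarith

/-- Lemma A.1 of the paper: for i.i.d. standard exponentials `e k`,
for any `ε ∈ (0,1)`, `m ≥ 1` and `x > −log (1 − 0.2075/2)`,
`P(max_{k ≥ 1} [e k − b_{m,ε}(k)] ≥ x) ≤ 1 − exp (−e^{−x} (ε⁻¹ + e^{−x}))`. -/
theorem statement9
    {Ω : Type*} [MeasurableSpace Ω] (P : Measure Ω) [IsProbabilityMeasure P]
    (e : ℕ+ → Ω → ℝ) (hem : ∀ k, Measurable (e k))
    (hindep : iIndepFun e P)
    (hexp : ∀ k, ∀ s : ℝ, 0 ≤ s → P {ω | s ≤ e k ω} = ENNReal.ofReal (Real.exp (-s)))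
    (ε : ℝ) (hε0 : 0 < ε) (hε1 : ε < 1)
    (m : ℕ) (hm : 1 ≤ m)
    (x : ℝ) (hx : -Real.log (1 - 0.2075 / 2) < x) :
    P {ω | ∃ k : ℕ+, x ≤ e k ω - bfun m ε ((k : ℕ) : ℝ)}
      ≤ ENNReal.ofReal (1 - Real.exp (-(Real.exp (-x) * (ε⁻¹ + Real.exp (-x))))) := by
  have hlog2 := Real.log_two_gt_d9
  have hε1' : ε ≤ 1 := hε1.le
  -- basic facts about x and r = exp (-x)
  have hc : ((1 : ℝ) - 0.2075 / 2) = 0.89625 := by norm_num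
  have hlogc : Real.log (1 - 0.2075/2) < 0 := Real.log_neg (by norm_num) (by norm_num)
  have hx0 : 0 < x := by linarith
  set r : ℝ := Real.exp (-x) with hr_def
  have hr0 : 0 < r := Real.exp_pos _
  have hr1 : r < 0.89625 := by
    have h1 : -x < Real.log 0.89625 := by rw [← hc]; linarith
    calc r = Real.exp (-x) := rfl
      _ < Real.exp (Real.log 0.89625) := Real.exp_lt_exp.mpr h1
      _ = 0.89625 := Real.exp_log (by norm_num)
  -- d and p
  set d : ℕ+ → ℝ := fun k => dfun m ε ((k : ℕ) : ℝ) with hd_def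
  have hk1 : ∀ k : ℕ+, (1 : ℝ) ≤ ((k : ℕ) : ℝ) := fun k => by exact_mod_cast k.one_le
  have hd_pos : ∀ k, 0 < d k := fun k => dfun_pos hε0 (hk1 k)
  have hd_le : ∀ k : ℕ+, d k ≤ 0.5513 := by
    intro k
    rcases eq_or_lt_of_le k.one_le with h | h
    · have : ((k : ℕ) : ℝ) = 1 := by rw [← h]; norm_num
      rw [hd_def]; simp only [this]
      exact dfun_one_bound hm hε0 hε1'
    · have h2 : (2 : ℝ) ≤ ((k : ℕ) : ℝ) := by exact_mod_cast h
      have h3 := dfun_big_bound hm hε0 hε1' h2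
      have h4 : (1:ℝ)/(((k:ℕ):ℝ) * (1 + Real.log 2)) ≤ 0.5513 := by
        rw [div_le_iff₀ (by nlinarith)]
        nlinarith
      exact h3.trans h4
  set p : ℕ+ → ℝ := fun k => r * d k with hp_def
  have hp0 : ∀ k, 0 ≤ p k := fun k => mul_nonneg hr0.le (hd_pos k).le
  have hp_half : ∀ k, p k ≤ 1/2 := by
    intro k
    have := hd_le k
    have := hd_pos k
    rw [hp_def]
    simp only
    nlinarith
  -- the exponent of each event
  have hbfun : ∀ k : ℕ+, Real.exp (-(x + bfun m ε ((k:ℕ):ℝ))) = p k := by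
    intro k
    rw [neg_add, Real.exp_add, exp_neg_bfun hε0 (hk1 k)]
  have hc_nonneg : ∀ k : ℕ+, 0 ≤ x + bfun m ε ((k:ℕ):ℝ) := by
    intro k
    have hlog : Real.log (d k) ≤ 0 := Real.log_nonpos (hd_pos k).le (by linarith [hd_le k])
    have : bfun m ε ((k:ℕ):ℝ) = -Real.log (d k) := bfun_eq m ε _
    rw [this]; linarith
  -- events
  set A : ℕ+ → Set Ω := fun k => (e k) ⁻¹' (Set.Ici (x + bfun m ε ((k:ℕ):ℝ))) with hA_def
  have hA_meas : ∀ k, MeasurableSet (A k) := fun k => (hem k) measurableSet_Ici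
  have hset : {ω | ∃ k : ℕ+, x ≤ e k ω - bfun m ε ((k:ℕ):ℝ)} = ⋃ k, A k := by
    ext ω
    simp only [Set.mem_setOf_eq, Set.mem_iUnion, hA_def, Set.mem_preimage, Set.mem_Ici,
      le_sub_iff_add_le]
  rw [hset]
  -- finite stages
  set S : ℕ → Finset ℕ+ := fun n => (Finset.range n).image Nat.succPNat with hS_def
  set B : ℕ → Set Ω := fun n => ⋃ k ∈ S n, A k with hB_def
  have hB_meas : ∀ n, MeasurableSet (B n) :=
    fun n => (S n).measurableSet_biUnion (fun k _ => hA_meas k)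
  have hBmono : Monotone B := by
    intro a b hab
    apply Set.iUnion₂_subset
    intro k hk
    apply Set.subset_iUnion₂ (s := fun k (_ : k ∈ S b) => A k) k
    simp only [hS_def, Finset.mem_image, Finset.mem_range] at hk ⊢
    obtain ⟨i, hi, rfl⟩ := hk
    exact ⟨i, lt_of_lt_of_le hi hab, rfl⟩
  have hUnion : ⋃ k, A k = ⋃ n, B n := by
    apply subset_antisymm
    · apply Set.iUnion_subset
      intro k
      have hkmem : k ∈ S (k : ℕ) := by
        simp only [hS_def, Finset.mem_image, Finset.mem_range]
        refine ⟨(k:ℕ) - 1, by have := k.pos; omega, ?_⟩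
        have := k.pos
        rw [← PNat.coe_inj, Nat.succPNat_coe]
        omega
      exact le_trans (Set.subset_iUnion₂ (s := fun j (_ : j ∈ S (k:ℕ)) => A j) k hkmem)
        (Set.subset_iUnion B (k : ℕ))
    · apply Set.iUnion_subset
      intro n
      apply Set.iUnion₂_subset
      intro k _
      exact Set.subset_iUnion A k
  rw [hUnion, Directed.measure_iUnion (hBmono.directed_le)]
  apply iSup_le
  intro n
  -- the key complement bound
  have hkey : ENNReal.ofReal (Real.exp (-(r * (ε⁻¹ + r)))) ≤ P ((B n)ᶜ) := by
    have hcompl : (B n)ᶜ = ⋂ k ∈ S n, (e k) ⁻¹' (Set.Iio (x + bfun m ε ((k:ℕ):ℝ))) := by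
      rw [hB_def]
      simp only [Set.compl_iUnion₂]
      apply Set.iInter₂_congr
      intro k _
      rw [hA_def, ← Set.preimage_compl, Set.compl_Ici]
    rw [hcompl,
      hindep.meas_biInter (fun k _ => ⟨Set.Iio (x + bfun m ε ((k:ℕ):ℝ)), measurableSet_Iio, rfl⟩)]
    have hfac : ∀ k ∈ S n, ENNReal.ofReal (Real.exp (-(p k + p k ^ 2))) ≤
        P ((e k) ⁻¹' (Set.Iio (x + bfun m ε ((k:ℕ):ℝ)))) := by
      intro k _
      have hPA : P ((e k) ⁻¹' (Set.Ici (x + bfun m ε ((k:ℕ):ℝ)))) = ENNReal.ofReal (p k) := by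
        rw [← hbfun k, ← hexp k _ (hc_nonneg k)]
        rfl
      have hIio : (e k) ⁻¹' (Set.Iio (x + bfun m ε ((k:ℕ):ℝ))) =
          ((e k) ⁻¹' (Set.Ici (x + bfun m ε ((k:ℕ):ℝ))))ᶜ := by
        rw [← Set.preimage_compl, Set.compl_Ici]
      rw [hIio, prob_compl_eq_one_sub ((hem k) measurableSet_Ici), hPA,
        ← ENNReal.ofReal_one, ← ENNReal.ofReal_sub _ (hp0 k)]
      exact ENNReal.ofReal_le_ofReal (exp_le_one_sub (hp0 k) (hp_half k))
    have hsum : ∑ k ∈ S n, (p k + p k ^ 2) ≤ r * (ε⁻¹ + r) := by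
      rw [hS_def, Finset.sum_image (fun a _ b _ h => Nat.succPNat_injective h)]
      have hcast : ∀ i : ℕ, p i.succPNat + p i.succPNat ^ 2 =
          r * dfun m ε ((i:ℝ) + 1) + r^2 * (dfun m ε ((i:ℝ)+1))^2 := by
        intro i
        have : ((i.succPNat : ℕ) : ℝ) = (i : ℝ) + 1 := by
          rw [Nat.succPNat_coe]; push_cast; ring
        rw [hp_def]; simp only [hd_def, this]; ring
      rw [Finset.sum_congr rfl (fun i _ => hcast i), Finset.sum_add_distrib,
        ← Finset.mul_sum, ← Finset.mul_sum]
      have h1 := sum_dfun_le (m := m) hε0 n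
      have h2 := sum_dfun_sq_le hm hε0 hε1' n
      have h3 : r * ∑ i ∈ Finset.range n, dfun m ε ((i:ℝ)+1) ≤ r * (1/ε) :=
        mul_le_mul_of_nonneg_left h1 hr0.le
      have h4 : r^2 * ∑ i ∈ Finset.range n, (dfun m ε ((i:ℝ)+1))^2 ≤ r^2 * 0.66 := by
        apply mul_le_mul_of_nonneg_left h2 (by positivity)
      have : r * (1/ε) = r * ε⁻¹ := by rw [one_div]
      nlinarith
    calc ENNReal.ofReal (Real.exp (-(r * (ε⁻¹ + r))))
        ≤ ENNReal.ofReal (Real.exp (-(∑ k ∈ S n, (p k + p k ^ 2)))) := by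
          apply ENNReal.ofReal_le_ofReal
          exact Real.exp_le_exp.mpr (neg_le_neg hsum)
      _ = ENNReal.ofReal (∏ k ∈ S n, Real.exp (-(p k + p k ^ 2))) := by
          rw [← Real.exp_sum]
          congr 1
          rw [← Finset.sum_neg_distrib]
      _ = ∏ k ∈ S n, ENNReal.ofReal (Real.exp (-(p k + p k ^ 2))) :=
          ENNReal.ofReal_prod_of_nonneg (fun k _ => (Real.exp_pos _).le)
      _ ≤ ∏ k ∈ S n, P ((e k) ⁻¹' (Set.Iio (x + bfun m ε ((k:ℕ):ℝ)))) :=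
          Finset.prod_le_prod' hfac
  -- conclude
  have hBn : P (B n) = 1 - P ((B n)ᶜ) := by
    rw [prob_compl_eq_one_sub (hB_meas n),
      ENNReal.sub_sub_cancel ENNReal.one_ne_top prob_le_one]
  rw [hBn]
  calc 1 - P ((B n)ᶜ) ≤ 1 - ENNReal.ofReal (Real.exp (-(r * (ε⁻¹ + r)))) :=
        tsub_le_tsub_left hkey 1
    _ = ENNReal.ofReal (1 - Real.exp (-(r * (ε⁻¹ + r)))) := by
        rw [ENNReal.ofReal_sub _ (Real.exp_nonneg _), ENNReal.ofReal_one]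
    _ ≤ ENNReal.ofReal (1 - Real.exp (-(Real.exp (-x) * (ε⁻¹ + Real.exp (-x))))) := le_refl _
end

section
/- For every ε ∈ (0,1] and every integer m ≥ 1, the function b_{m,ε} is nondecreasing on [1, ∞): if 1 ≤ x ≤ y then b_{m,ε}(x) ≤ b_{m,ε}(y). -/
open Real Set

lemma phi_one_le (m : ℕ) {x : ℝ} (hx : 1 ≤ x) : 1 ≤ Phi m x := by
  induction m with
  | zero => exact hx
  | succ n ih =>
    show 1 ≤ 1 + Real.log (Phi n x)
    have := Real.log_nonneg ih
    linarith

lemma phi_lt (m : ℕ) {x y : ℝ} (hx : 1 ≤ x) (hxy : x < y) : Phi m x < Phi m y := by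
  induction m with
  | zero => exact hxy
  | succ n ih =>
    show 1 + Real.log (Phi n x) < 1 + Real.log (Phi n y)
    have h1 : (0:ℝ) < Phi n x := lt_of_lt_of_le zero_lt_one (phi_one_le n hx)
    linarith [Real.log_lt_log h1 ih]

lemma phi_concave (m : ℕ) : ConcaveOn ℝ (Ici (1:ℝ)) (Phi m) := by
  induction m with
  | zero =>
    exact ⟨convex_Ici 1, fun x _ y _ a b _ _ _ => le_of_eq rfl⟩
  | succ n ih =>
    refine ⟨convex_Ici 1, ?_⟩
    intro x hx y hy a b ha hb hab
    have h1 : (1:ℝ) ≤ Phi n x := phi_one_le n hx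
    have h2 : (1:ℝ) ≤ Phi n y := phi_one_le n hy
    have hcomb : a • Phi n x + b • Phi n y ∈ Ioi (0:ℝ) := by
      simp only [smul_eq_mul, mem_Ioi]
      nlinarith
    have hlog : a • Real.log (Phi n x) + b • Real.log (Phi n y)
        ≤ Real.log (a • Phi n x + b • Phi n y) :=
      strictConcaveOn_log_Ioi.concaveOn.2 (by exact lt_of_lt_of_le zero_lt_one h1)
        (by exact lt_of_lt_of_le zero_lt_one h2) ha hb hab
    have hphi : a • Phi n x + b • Phi n y ≤ Phi n (a • x + b • y) :=
      ih.2 hx hy ha hb hab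
    have hmono : Real.log (a • Phi n x + b • Phi n y) ≤ Real.log (Phi n (a • x + b • y)) :=
      Real.log_le_log hcomb hphi
    show a • (1 + Real.log (Phi n x)) + b • (1 + Real.log (Phi n y))
        ≤ 1 + Real.log (Phi n (a • x + b • y))
    simp only [smul_eq_mul] at *
    nlinarith

lemma convexOn_rpow_neg {ε : ℝ} (hε : 0 < ε) :
    ConvexOn ℝ (Ici (1:ℝ)) (fun t : ℝ => t ^ (-ε)) := by
  apply MonotoneOn.convexOn_of_deriv (convex_Ici 1)
  · exact ContinuousOn.rpow_const continuousOn_id fun t ht =>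
      Or.inl (ne_of_gt (lt_of_lt_of_le zero_lt_one ht))
  · intro t ht
    rw [interior_Ici] at ht
    exact (Real.differentiableAt_rpow_const_of_ne (-ε)
      (ne_of_gt (lt_trans zero_lt_one ht))).differentiableWithinAt
  · rw [interior_Ici]
    intro a ha b hb hab
    have ha0 : (0:ℝ) < a := lt_trans zero_lt_one ha
    have hb0 : (0:ℝ) < b := lt_trans zero_lt_one hb
    rw [Real.deriv_rpow_const (x := a),
        Real.deriv_rpow_const (x := b)]
    have hle : b ^ (-ε - 1) ≤ a ^ (-ε - 1) :=
      Real.rpow_le_rpow_of_nonpos ha0 hab (by linarith)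
    nlinarith [Real.rpow_pos_of_pos ha0 (-ε - 1), Real.rpow_pos_of_pos hb0 (-ε - 1)]

lemma convexOn_phi_rpow_neg (m : ℕ) {ε : ℝ} (hε : 0 < ε) :
    ConvexOn ℝ (Ici (1:ℝ)) (fun x => Phi m x ^ (-ε)) := by
  refine ⟨convex_Ici 1, ?_⟩
  intro x hx y hy a b ha hb hab
  have h1 : (1:ℝ) ≤ Phi m x := phi_one_le m hx
  have h2 : (1:ℝ) ≤ Phi m y := phi_one_le m hy
  have hcomb : (0:ℝ) < a • Phi m x + b • Phi m y := by
    simp only [smul_eq_mul]; nlinarith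
  have hphi : a • Phi m x + b • Phi m y ≤ Phi m (a • x + b • y) :=
    (phi_concave m).2 hx hy ha hb hab
  have step1 : Phi m (a • x + b • y) ^ (-ε) ≤ (a • Phi m x + b • Phi m y) ^ (-ε) :=
    Real.rpow_le_rpow_of_nonpos hcomb hphi (by linarith)
  have step2 : (a • Phi m x + b • Phi m y) ^ (-ε)
      ≤ a • Phi m x ^ (-ε) + b • Phi m y ^ (-ε) :=
    (convexOn_rpow_neg hε).2 h1 h2 ha hb hab
  exact step1.trans step2

lemma diff_antitone {f : ℝ → ℝ} (hf : ConvexOn ℝ (Ici (1:ℝ)) f)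
    {x y : ℝ} (hx : 1 ≤ x) (hxy : x ≤ y) :
    f y - f (y + 1) ≤ f x - f (x + 1) := by
  rcases eq_or_lt_of_le hxy with rfl | hlt
  · exact le_rfl
  have hy : (1:ℝ) ≤ y := hx.trans hxy
  have hx1 : x + 1 ∈ Ici (1:ℝ) := by simp [mem_Ici]; linarith
  have hy1 : y + 1 ∈ Ici (1:ℝ) := by simp [mem_Ici]; linarith
  have hA := hf.secant_mono (a := x) (x := x + 1) (y := y + 1)
    (mem_Ici.mpr hx) hx1 hy1 (by intro h; linarith) (by intro h; linarith) (by linarith)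
  have hB := hf.secant_mono (a := y + 1) (x := x) (y := y)
    hy1 (mem_Ici.mpr hx) (mem_Ici.mpr hy) (by intro h; linarith) (by intro h; linarith)
    hxy
  have e0 : x + 1 - x = (1:ℝ) := by ring
  rw [e0, div_one] at hA
  have e1 : (f x - f (y + 1)) / (x - (y + 1)) = (f (y + 1) - f x) / (y + 1 - x) := by
    rw [← neg_div_neg_eq]; ring_nf
  have e2 : (f y - f (y + 1)) / (y - (y + 1)) = f (y + 1) - f y := by
    have : y - (y + 1) = -1 := by ring
    rw [this]
    field_simp
    ring
  rw [e1, e2] at hB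
  linarith [hA.trans hB]

/-- For every `ε ∈ (0,1]` and integer `m ≥ 1`, the boundary `b_{m,ε}` is
nondecreasing on `[1, ∞)`. -/
theorem statement11 (ε : ℝ) (hε0 : 0 < ε) (hε1 : ε ≤ 1) (m : ℕ) (hm : 1 ≤ m)
    (x y : ℝ) (hx : 1 ≤ x) (hxy : x ≤ y) :
    bfun m ε x ≤ bfun m ε y := by
  have hy : (1:ℝ) ≤ y := hx.trans hxy
  set f : ℝ → ℝ := fun z => Phi m z ^ (-ε) with hf
  -- rewrite bfun in terms of f
  have key : ∀ z : ℝ, 1 ≤ z →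
      1 / (ε * Phi m z ^ ε) - 1 / (ε * Phi m (z + 1) ^ ε) = (f z - f (z + 1)) / ε := by
    intro z hz
    have h1 : (0:ℝ) < Phi m z := lt_of_lt_of_le zero_lt_one (phi_one_le m hz)
    have h2 : (0:ℝ) < Phi m (z + 1) :=
      lt_of_lt_of_le zero_lt_one (phi_one_le m (by linarith))
    have p1 : (0:ℝ) < Phi m z ^ ε := Real.rpow_pos_of_pos h1 ε
    have p2 : (0:ℝ) < Phi m (z + 1) ^ ε := Real.rpow_pos_of_pos h2 ε
    simp only [hf, Real.rpow_neg h1.le, Real.rpow_neg h2.le]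
    field_simp
  -- monotonicity of the difference
  have hconv := convexOn_phi_rpow_neg m hε0
  have hdiff : f y - f (y + 1) ≤ f x - f (x + 1) := diff_antitone hconv hx hxy
  -- positivity of the difference at y
  have hylt : Phi m y < Phi m (y + 1) := phi_lt m hy (by linarith)
  have hy0 : (0:ℝ) < Phi m y := lt_of_lt_of_le zero_lt_one (phi_one_le m hy)
  have hpos : 0 < f y - f (y + 1) := by
    have := Real.rpow_lt_rpow_of_neg hy0 hylt (neg_neg_iff_pos.mpr hε0)
    simp only [hf]
    linarith
  unfold bfun
  rw [key x hx, key y hy]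
  have hlog : Real.log ((f y - f (y + 1)) / ε) ≤ Real.log ((f x - f (x + 1)) / ε) :=
    Real.log_le_log (by positivity) (by gcongr)
  linarith
end

section
/- For every ε ∈ (0,1] and every integer m ≥ 1, b_{m,ε}(x) − { log x + Σ_{j=1}^{m} log Φ_j(x) + ε log Φ_m(x) } → 0 as x → ∞. -/
open Filter Topology

lemma phi_tendsto (m : ℕ) : Tendsto (Phi m) atTop atTop := by
  induction m with
  | zero => exact tendsto_id
  | succ m ih =>
    have : Tendsto (fun x => 1 + Real.log (Phi m x)) atTop atTop :=
      tendsto_atTop_add_const_left _ 1 (Real.tendsto_log_atTop.comp ih)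
    exact this

lemma phi_eventually (m : ℕ) : ∀ᶠ x : ℝ in atTop, ∀ j ≤ m, 1 ≤ Phi j x := by
  induction m with
  | zero =>
    filter_upwards [eventually_ge_atTop (1 : ℝ)] with x hx j hj
    interval_cases j
    exact hx
  | succ m ih =>
    filter_upwards [ih, (phi_tendsto (m + 1)).eventually_ge_atTop 1] with x h1 h2 j hj
    by_cases h : j ≤ m
    · exact h1 j h
    · have hj' : j = m + 1 := by omega
      subst hj'; exact h2

lemma phi_mono (m : ℕ) {s t : ℝ} (hst : s ≤ t) (hs : ∀ j < m, 0 < Phi j s) :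
    Phi m s ≤ Phi m t := by
  induction m with
  | zero => exact hst
  | succ m ih =>
    have h1 : 0 < Phi m s := hs m (Nat.lt_succ_self m)
    have h2 := ih (fun j hj => hs j (by omega))
    have : 1 + Real.log (Phi m s) ≤ 1 + Real.log (Phi m t) :=
      (add_le_add_iff_left 1).mpr (Real.log_le_log h1 h2)
    exact this

lemma phi_hasDerivAt (m : ℕ) (t : ℝ) (h : ∀ j < m, 0 < Phi j t) :
    HasDerivAt (Phi m) (∏ j ∈ Finset.range m, (Phi j t)⁻¹) t := by
  induction m with
  | zero =>
    have h0 : HasDerivAt (Phi 0) 1 t := hasDerivAt_id t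
    simpa using h0
  | succ m ih =>
    have h' : ∀ j < m, 0 < Phi j t := fun j hj => h j (by omega)
    have hmpos : 0 < Phi m t := h m (Nat.lt_succ_self m)
    have hlog := (Real.hasDerivAt_log hmpos.ne').comp t (ih h')
    have : HasDerivAt (fun x => 1 + Real.log (Phi m x))
        ((Phi m t)⁻¹ * ∏ j ∈ Finset.range m, (Phi j t)⁻¹) t := hlog.const_add 1
    have heq : (Phi m t)⁻¹ * ∏ j ∈ Finset.range m, (Phi j t)⁻¹
        = ∏ j ∈ Finset.range (m + 1), (Phi j t)⁻¹ := by
      rw [Finset.prod_range_succ, mul_comm]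
    rw [heq] at this
    exact this

/-- The function `H(t) = Φ_m(t)^{-(ε+1)} ∏_{j<m} Φ_j(t)⁻¹` (= minus the derivative of
`t ↦ 1/(ε Φ_m(t)^ε)`). -/
noncomputable def Hfun (m : ℕ) (ε : ℝ) (t : ℝ) : ℝ :=
  Phi m t ^ (-(ε + 1)) * ∏ j ∈ Finset.range m, (Phi j t)⁻¹

lemma Hfun_pos (m : ℕ) (ε : ℝ) {t : ℝ} (h : ∀ j ≤ m, 0 < Phi j t) : 0 < Hfun m ε t := by
  refine mul_pos (Real.rpow_pos_of_pos (h m le_rfl) _) (Finset.prod_pos ?_)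
  exact fun j hj => inv_pos.mpr (h j (Finset.mem_range.mp hj).le)

lemma F_hasDerivAt (m : ℕ) {ε : ℝ} (hε : 0 < ε) (t : ℝ) (h : ∀ j ≤ m, 0 < Phi j t) :
    HasDerivAt (fun s => 1 / (ε * Phi m s ^ ε)) (-Hfun m ε t) t := by
  have hd := phi_hasDerivAt m t (fun j hj => h j hj.le)
  have hmpos : 0 < Phi m t := h m le_rfl
  have h1 : HasDerivAt (fun s => Phi m s ^ (-ε))
      ((-ε * Phi m t ^ (-ε - 1)) * ∏ j ∈ Finset.range m, (Phi j t)⁻¹) t :=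
    (Real.hasDerivAt_rpow_const (x := Phi m t) (p := -ε) (Or.inl hmpos.ne')).comp t hd
  have h2 := h1.const_mul ε⁻¹
  have hnb : ∀ᶠ s in 𝓝 t, 0 < Phi m s := by
    have : Phi m ⁻¹' Set.Ioi 0 ∈ 𝓝 t :=
      hd.continuousAt.preimage_mem_nhds (Ioi_mem_nhds hmpos)
    filter_upwards [this] with s hs using hs
  have heq : (fun s => ε⁻¹ * Phi m s ^ (-ε)) =ᶠ[𝓝 t] fun s => 1 / (ε * Phi m s ^ ε) := by
    filter_upwards [hnb] with s hs
    rw [Real.rpow_neg hs.le, one_div, mul_inv]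
  have h3 := h2.congr_of_eventuallyEq heq.symm
  have hval : ε⁻¹ * ((-ε * Phi m t ^ (-ε - 1)) * ∏ j ∈ Finset.range m, (Phi j t)⁻¹)
      = -Hfun m ε t := by
    have hexp : -ε - 1 = -(ε + 1) := by ring
    rw [hexp, Hfun]
    have hcan : ε⁻¹ * (-ε) = -1 := by field_simp
    calc ε⁻¹ * (-ε * Phi m t ^ (-(ε + 1)) * ∏ j ∈ Finset.range m, (Phi j t)⁻¹)
        = ε⁻¹ * (-ε) * (Phi m t ^ (-(ε + 1)) * ∏ j ∈ Finset.range m, (Phi j t)⁻¹) := by ring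
      _ = -(Phi m t ^ (-(ε + 1)) * ∏ j ∈ Finset.range m, (Phi j t)⁻¹) := by rw [hcan]; ring
  rwa [hval] at h3

lemma Hfun_anti (m : ℕ) {ε : ℝ} (hε : 0 < ε) {s t : ℝ} (hst : s ≤ t)
    (hs : ∀ j ≤ m, 1 ≤ Phi j s) : Hfun m ε t ≤ Hfun m ε s := by
  have hpos : ∀ j ≤ m, 0 < Phi j s := fun j hj => lt_of_lt_of_le one_pos (hs j hj)
  have hmono : ∀ j ≤ m, Phi j s ≤ Phi j t := fun j hj =>
    phi_mono j hst (fun i hi => hpos i (le_trans hi.le hj))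
  have h1 : Phi m t ^ (-(ε + 1)) ≤ Phi m s ^ (-(ε + 1)) :=
    Real.rpow_le_rpow_of_nonpos (hpos m le_rfl) (hmono m le_rfl) (by linarith)
  have h2 : (∏ j ∈ Finset.range m, (Phi j t)⁻¹) ≤ ∏ j ∈ Finset.range m, (Phi j s)⁻¹ := by
    refine Finset.prod_le_prod (fun j hj => ?_) (fun j hj => ?_)
    · exact inv_nonneg.mpr (le_trans (hpos j (Finset.mem_range.mp hj).le).le
        (hmono j (Finset.mem_range.mp hj).le))
    · exact inv_anti₀ (hpos j (Finset.mem_range.mp hj).le)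
        (hmono j (Finset.mem_range.mp hj).le)
  refine mul_le_mul h1 h2 (Finset.prod_nonneg fun j hj => inv_nonneg.mpr ?_)
    (Real.rpow_pos_of_pos (hpos m le_rfl) _).le
  exact le_trans (hpos j (Finset.mem_range.mp hj).le).le (hmono j (Finset.mem_range.mp hj).le)

lemma neg_log_Hfun (m : ℕ) (ε : ℝ) {t : ℝ} (h : ∀ j ≤ m, 0 < Phi j t) :
    -Real.log (Hfun m ε t) =
      Real.log t + ∑ j ∈ Finset.Icc 1 m, Real.log (Phi j t) + ε * Real.log (Phi m t) := by
  have hmpos : 0 < Phi m t := h m le_rfl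
  have hprodpos : 0 < ∏ j ∈ Finset.range m, (Phi j t)⁻¹ :=
    Finset.prod_pos fun j hj => inv_pos.mpr (h j (Finset.mem_range.mp hj).le)
  have h1 : Real.log (Hfun m ε t) = (-(ε + 1)) * Real.log (Phi m t)
      + ∑ j ∈ Finset.range m, Real.log (Phi j t)⁻¹ := by
    rw [Hfun, Real.log_mul (by positivity) hprodpos.ne', Real.log_rpow hmpos,
      Real.log_prod]
    exact fun j hj => (inv_pos.mpr (h j (Finset.mem_range.mp hj).le)).ne'
  have h2 : ∑ j ∈ Finset.range m, Real.log (Phi j t)⁻¹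
      = -∑ j ∈ Finset.range m, Real.log (Phi j t) := by
    rw [← Finset.sum_neg_distrib]
    exact Finset.sum_congr rfl fun j hj => Real.log_inv _
  have h3 : ∑ j ∈ Finset.Icc 1 m, Real.log (Phi j t)
      = ∑ i ∈ Finset.range m, Real.log (Phi (1 + i) t) := by
    rw [← Finset.Ico_add_one_right_eq_Icc, Finset.sum_Ico_eq_sum_range]
    simp
  have h4 : ∑ i ∈ Finset.range m, Real.log (Phi (1 + i) t)
      = ∑ j ∈ Finset.range (m + 1), Real.log (Phi j t) - Real.log (Phi 0 t) := by
    rw [Finset.sum_range_succ' (fun j => Real.log (Phi j t)) m]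
    simp [add_comm]
  have h5 : ∑ j ∈ Finset.range (m + 1), Real.log (Phi j t)
      = ∑ j ∈ Finset.range m, Real.log (Phi j t) + Real.log (Phi m t) :=
    Finset.sum_range_succ _ m
  have h0 : Phi 0 t = t := rfl
  rw [h1, h2, h3, h4, h5, h0]
  ring

lemma log_phi_diff (k : ℕ) :
    Tendsto (fun x : ℝ => Real.log (Phi k (x + 1)) - Real.log (Phi k x)) atTop (𝓝 0) := by
  induction k with
  | zero =>
    have h1 : Tendsto (fun x : ℝ => 1 + x⁻¹) atTop (𝓝 1) := by
      simpa using (tendsto_const_nhds (x := (1:ℝ)) (f := atTop)).add tendsto_inv_atTop_zero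
    have h2 : Tendsto (fun x : ℝ => Real.log (1 + x⁻¹)) atTop (𝓝 0) := by
      have := (Real.continuousAt_log (x := 1) one_ne_zero).tendsto.comp h1
      simpa [Function.comp_def] using this
    refine h2.congr' ?_
    filter_upwards [eventually_ge_atTop (1 : ℝ)] with x hx
    have hx0 : (0:ℝ) < x := lt_of_lt_of_le one_pos hx
    have : 1 + x⁻¹ = (x + 1) / x := by field_simp
    rw [this, Real.log_div (by linarith) hx0.ne']
    rfl
  | succ k ih =>
    have hev := phi_eventually (k + 1)
    have hinv : Tendsto (fun x : ℝ => (Phi (k + 1) x)⁻¹) atTop (𝓝 0) :=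
      (phi_tendsto (k + 1)).inv_tendsto_atTop
    have hprod : Tendsto (fun x : ℝ =>
        (Real.log (Phi k (x + 1)) - Real.log (Phi k x)) * (Phi (k + 1) x)⁻¹) atTop (𝓝 0) := by
      simpa using ih.mul hinv
    have hratio : Tendsto (fun x : ℝ =>
        1 + (Real.log (Phi k (x + 1)) - Real.log (Phi k x)) * (Phi (k + 1) x)⁻¹)
        atTop (𝓝 1) := by
      simpa using (tendsto_const_nhds (x := (1:ℝ)) (f := atTop)).add hprod
    have h2 : Tendsto (fun x : ℝ => Real.log
        (1 + (Real.log (Phi k (x + 1)) - Real.log (Phi k x)) * (Phi (k + 1) x)⁻¹))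
        atTop (𝓝 0) := by
      have := (Real.continuousAt_log (x := 1) one_ne_zero).tendsto.comp hratio
      simpa [Function.comp_def] using this
    refine h2.congr' ?_
    filter_upwards [hev, (tendsto_atTop_add_const_right atTop (1:ℝ) tendsto_id).eventually hev]
      with x hx hx1
    have hxpos : 0 < Phi (k + 1) x := lt_of_lt_of_le one_pos (hx (k + 1) le_rfl)
    have hx1pos : 0 < Phi (k + 1) (x + 1) := lt_of_lt_of_le one_pos (hx1 (k + 1) le_rfl)
    have key : 1 + (Real.log (Phi k (x + 1)) - Real.log (Phi k x)) * (Phi (k + 1) x)⁻¹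
        = Phi (k + 1) (x + 1) / Phi (k + 1) x := by
      have e1 : Phi (k + 1) (x + 1) = 1 + Real.log (Phi k (x + 1)) := rfl
      have e2 : Phi (k + 1) x = 1 + Real.log (Phi k x) := rfl
      rw [e1, e2]
      have hne : (1 : ℝ) + Real.log (Phi k x) ≠ 0 := by
        rw [← e2]; exact hxpos.ne'
      field_simp
      ring
    rw [key, Real.log_div hx1pos.ne' hxpos.ne']

/-- As `x → ∞`,
`b_{m,ε}(x) = log x + Σ_{j=1}^m log Φ_j(x) + ε log Φ_m(x) + o(1)`. -/
theorem statement13 (ε : ℝ) (hε0 : 0 < ε) (hε1 : ε ≤ 1) (m : ℕ) (hm : 1 ≤ m) :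
    Tendsto (fun x : ℝ => bfun m ε x -
        (Real.log x + ∑ j ∈ Finset.Icc 1 m, Real.log (Phi j x)
          + ε * Real.log (Phi m x)))
      atTop (𝓝 0) := by
  set g : ℝ → ℝ := fun x => Real.log x + ∑ j ∈ Finset.Icc 1 m, Real.log (Phi j x)
    + ε * Real.log (Phi m x) with hg
  -- the upper bound tends to 0
  have hub : Tendsto (fun x : ℝ => g (x + 1) - g x) atTop (𝓝 0) := by
    have hexp : (fun x : ℝ => g (x + 1) - g x) = fun x =>
        (Real.log (Phi 0 (x + 1)) - Real.log (Phi 0 x))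
        + ∑ j ∈ Finset.Icc 1 m, (Real.log (Phi j (x + 1)) - Real.log (Phi j x))
        + ε * (Real.log (Phi m (x + 1)) - Real.log (Phi m x)) := by
      funext x
      simp only [hg, Phi, Finset.sum_sub_distrib]
      ring
    rw [hexp]
    have hsum : Tendsto (fun x : ℝ =>
        ∑ j ∈ Finset.Icc 1 m, (Real.log (Phi j (x + 1)) - Real.log (Phi j x)))
        atTop (𝓝 0) := by
      have := tendsto_finset_sum (Finset.Icc 1 m)
        (fun j _ => log_phi_diff j)
      simpa using this
    have h0 := log_phi_diff 0
    have hmm := (log_phi_diff m).const_mul ε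
    have := (h0.add hsum).add hmm
    simpa using this
  -- eventual bounds
  obtain ⟨a, ha⟩ := eventually_atTop.mp (phi_eventually m)
  have key : ∀ᶠ x : ℝ in atTop,
      0 ≤ bfun m ε x - g x ∧ bfun m ε x - g x ≤ g (x + 1) - g x := by
    filter_upwards [eventually_ge_atTop a] with x hxa
    have hx : ∀ t : ℝ, x ≤ t → ∀ j ≤ m, 1 ≤ Phi j t := fun t ht j hj =>
      ha t (le_trans hxa ht) j hj
    have hxpos : ∀ j ≤ m, 0 < Phi j x := fun j hj =>
      lt_of_lt_of_le one_pos (hx x le_rfl j hj)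
    have hx1pos : ∀ j ≤ m, 0 < Phi j (x + 1) := fun j hj =>
      lt_of_lt_of_le one_pos (hx (x + 1) (by linarith) j hj)
    -- MVT
    have hmvt := exists_hasDerivAt_eq_slope (fun s => 1 / (ε * Phi m s ^ ε))
      (fun s => -Hfun m ε s) (show x < x + 1 by linarith)
      (fun t ht => (F_hasDerivAt m hε0 t
        (fun j hj => lt_of_lt_of_le one_pos (hx t ht.1 j hj))).continuousAt.continuousWithinAt)
      (fun t ht => F_hasDerivAt m hε0 t
        (fun j hj => lt_of_lt_of_le one_pos (hx t ht.1.le j hj)))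
    obtain ⟨c, hc, hceq⟩ := hmvt
    have hD : 1 / (ε * Phi m x ^ ε) - 1 / (ε * Phi m (x + 1) ^ ε) = Hfun m ε c := by
      have : -Hfun m ε c = (1 / (ε * Phi m (x + 1) ^ ε) - 1 / (ε * Phi m x ^ ε)) / (x + 1 - x) := hceq
      rw [show x + 1 - x = (1:ℝ) by ring, div_one] at this
      linarith
    have hcge : x ≤ c := hc.1.le
    have hcpos : ∀ j ≤ m, 0 < Phi j c := fun j hj =>
      lt_of_lt_of_le one_pos (hx c hcge j hj)
    have Hcpos : 0 < Hfun m ε c := Hfun_pos m ε hcpos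
    have Hlow : Hfun m ε (x + 1) ≤ Hfun m ε c := Hfun_anti m hε0 hc.2.le (hx c hcge)
    have Hhigh : Hfun m ε c ≤ Hfun m ε x := Hfun_anti m hε0 hcge (hx x le_rfl)
    have Hx1pos : 0 < Hfun m ε (x + 1) := Hfun_pos m ε hx1pos
    have hb : bfun m ε x = -Real.log (Hfun m ε c) := by rw [bfun, hD]
    have hgx : g x = -Real.log (Hfun m ε x) := (neg_log_Hfun m ε hxpos).symm
    have hgx1 : g (x + 1) = -Real.log (Hfun m ε (x + 1)) := (neg_log_Hfun m ε hx1pos).symm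
    constructor
    · rw [hb, hgx]
      have := Real.log_le_log Hcpos Hhigh
      linarith
    · rw [hb, hgx]
      have := Real.log_le_log Hx1pos Hlow
      rw [hgx1]
      linarith
  refine tendsto_of_tendsto_of_tendsto_of_le_of_le' tendsto_const_nhds hub ?_ ?_
  · filter_upwards [key] with x h using h.1
  · filter_upwards [key] with x h using h.2
end

section
/- For every real θ > 1, lim_{j → ∞} j · log(Φ_j(θ)) = 2. -/
open Filter Topology

-- log(1+t)/t → 1 as t → 0+
lemma limB : Tendsto (fun t : ℝ => Real.log (1 + t) / t) (𝓝[>] (0:ℝ)) (𝓝 1) := by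
  have h : HasDerivAt Real.log 1 1 := by
    simpa using Real.hasDerivAt_log one_ne_zero
  rw [hasDerivAt_iff_tendsto_slope] at h
  have hmap : Tendsto (fun t : ℝ => 1 + t) (𝓝[>] (0:ℝ)) (𝓝[≠] (1:ℝ)) := by
    apply tendsto_nhdsWithin_of_tendsto_nhds_of_eventually_within
    · have : Tendsto (fun t : ℝ => 1 + t) (𝓝 (0:ℝ)) (𝓝 (1+0)) :=
        (continuous_const.add continuous_id).tendsto 0
      simpa using this.mono_left nhdsWithin_le_nhds
    · filter_upwards [self_mem_nhdsWithin] with t ht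
      simp only [Set.mem_Ioi] at ht
      simp only [Set.mem_compl_iff, Set.mem_singleton_iff]
      intro hcon; linarith [hcon]
  have := h.comp hmap
  refine this.congr fun t => ?_
  simp [slope_def_field, Real.log_one]

-- (t - log(1+t))/t² → 1/2 as t → 0+
lemma limA : Tendsto (fun t : ℝ => (t - Real.log (1 + t)) / t ^ 2) (𝓝[>] (0:ℝ)) (𝓝 (1/2)) := by
  rw [tendsto_iff_norm_sub_tendsto_zero]
  apply squeeze_zero' (Eventually.of_forall fun t => norm_nonneg _)
    (g := fun t : ℝ => 2 * t)
  · filter_upwards [Ioo_mem_nhdsGT_of_mem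
      (by constructor <;> norm_num : (0:ℝ) ∈ Set.Ico (0:ℝ) (1/2))] with t ht
    obtain ⟨ht0, ht1⟩ := ht
    have habs' := Real.abs_log_sub_add_sum_range_le (x := -t)
      (by rw [abs_neg, abs_of_pos ht0]; linarith) 2
    have habs : |(-t + t ^ 2 / 2) + Real.log (1 + t)| ≤ t ^ 3 / (1 - t) := by
      have h1 : (∑ i ∈ Finset.range 2, (-t) ^ (i + 1) / (i + 1)) = -t + t ^ 2 / 2 := by
        simp [Finset.sum_range_succ]; ring
      have h2 : (1:ℝ) - -t = 1 + t := by ring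
      have h3 : |-t| = t := by rw [abs_neg, abs_of_pos ht0]
      rwa [h1, h2, h3] at habs'
    have hLpos : 0 < Real.log (1 + t) := Real.log_pos (by linarith)
    have key : (t - Real.log (1 + t)) / t ^ 2 - 1 / 2
        = -((-t + t ^ 2 / 2 + Real.log (1 + t)) / t ^ 2) := by
      field_simp
      ring
    rw [Real.norm_eq_abs, key, abs_neg, abs_div, abs_of_pos (pow_pos ht0 2)]
    calc |(-t + t ^ 2 / 2 + Real.log (1 + t))| / t ^ 2
        ≤ (t ^ 3 / (1 - t)) / t ^ 2 := by gcongr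
      _ = t / (1 - t) := by
          have h1 : t ≠ 0 := ht0.ne'
          have h2 : (1:ℝ) - t ≠ 0 := by intro h; linarith [sub_eq_zero.mp h]
          field_simp
      _ ≤ 2 * t := by rw [div_le_iff₀ (by linarith)]; nlinarith
  · have : Tendsto (fun t : ℝ => 2 * t) (𝓝 (0:ℝ)) (𝓝 (2 * 0)) :=
      (continuous_const.mul continuous_id).tendsto 0
    simpa using this.mono_left nhdsWithin_le_nhds

-- 1/log(1+t) - 1/t → 1/2 as t → 0+
lemma limF : Tendsto (fun t : ℝ => (Real.log (1 + t))⁻¹ - t⁻¹) (𝓝[>] (0:ℝ)) (𝓝 (1/2)) := by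
  have h := limA.div limB one_ne_zero
  rw [div_one] at h
  refine h.congr' ?_
  filter_upwards [Ioo_mem_nhdsGT_of_mem
      (by constructor <;> norm_num : (0:ℝ) ∈ Set.Ico (0:ℝ) 1)] with t ht
  obtain ⟨ht0, _⟩ := ht
  have hL : 0 < Real.log (1 + t) := Real.log_pos (by linarith)
  simp only [Pi.div_apply]
  field_simp

-- the main sequence result
lemma key (u : ℕ → ℝ) (h0 : 0 < u 0) (hrec : ∀ j, u (j + 1) = Real.log (1 + u j)) :
    Tendsto (fun j : ℕ => (j : ℝ) * u j) atTop (𝓝 2) := by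
  have pos : ∀ j, 0 < u j := by
    intro j
    induction j with
    | zero => exact h0
    | succ n ih => rw [hrec]; exact Real.log_pos (by linarith)
  have hlt : ∀ j, u (j + 1) < u j := by
    intro j
    have := Real.log_lt_sub_one_of_pos (by linarith [pos j] : (0:ℝ) < 1 + u j)
      (by have := pos j; intro h; linarith [h] : (1:ℝ) + u j ≠ 1)
    rw [hrec]; linarith
  have hanti : StrictAnti u := strictAnti_nat_of_succ_lt hlt
  have hbdd : BddBelow (Set.range u) := ⟨0, by rintro x ⟨j, rfl⟩; exact (pos j).le⟩
  have hL : Tendsto u atTop (𝓝 (⨅ j, u j)) := tendsto_atTop_ciInf hanti.antitone hbdd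
  set L := ⨅ j, u j with hLdef
  have hL0 : 0 ≤ L := le_ciInf fun j => (pos j).le
  have hfix : Real.log (1 + L) = L := by
    have h1 : Tendsto (fun j => u (j + 1)) atTop (𝓝 L) :=
      hL.comp (tendsto_add_atTop_nat 1)
    have h2 : Tendsto (fun j => Real.log (1 + u j)) atTop (𝓝 (Real.log (1 + L))) :=
      ((Real.continuousAt_log (by linarith : (1:ℝ) + L ≠ 0)).tendsto).comp
        (tendsto_const_nhds.add hL)
    exact tendsto_nhds_unique (h2.congr fun j => (hrec j).symm) h1
  have hLzero : L = 0 := by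
    by_contra h
    have hLpos : 0 < L := lt_of_le_of_ne hL0 (Ne.symm h)
    have := Real.log_lt_sub_one_of_pos (by linarith : (0:ℝ) < 1 + L)
      (by intro hc; linarith [hc] : (1:ℝ) + L ≠ 1)
    linarith
  have hU0 : Tendsto u atTop (𝓝 0) := hLzero ▸ hL
  have hUin : Tendsto u atTop (𝓝[>] (0:ℝ)) :=
    tendsto_nhdsWithin_of_tendsto_nhds_of_eventually_within u hU0
      (Eventually.of_forall pos)
  have hdiff : Tendsto (fun j => (u (j + 1))⁻¹ - (u j)⁻¹) atTop (𝓝 (1/2)) := by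
    refine (limF.comp hUin).congr fun j => ?_
    simp only [Function.comp_apply]
    rw [hrec]
  have hces := hdiff.cesaro
  have htel : ∀ n : ℕ, (∑ i ∈ Finset.range n, ((u (i + 1))⁻¹ - (u i)⁻¹))
      = (u n)⁻¹ - (u 0)⁻¹ := fun n => Finset.sum_range_sub (fun i => (u i)⁻¹) n
  have hces' : Tendsto (fun n : ℕ => (n : ℝ)⁻¹ * ((u n)⁻¹ - (u 0)⁻¹)) atTop (𝓝 (1/2)) :=
    hces.congr fun n => by rw [htel]
  have h3 : Tendsto (fun n : ℕ => (n : ℝ)⁻¹ * (u 0)⁻¹) atTop (𝓝 0) := by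
    simpa using tendsto_inv_atTop_nhds_zero_nat.mul_const ((u 0)⁻¹)
  have hinv : Tendsto (fun n : ℕ => (n : ℝ)⁻¹ * (u n)⁻¹) atTop (𝓝 (1/2)) := by
    have := hces'.add h3
    rw [add_zero] at this
    exact this.congr fun n => by ring
  have hfin := hinv.inv₀ (by norm_num : (1/2 : ℝ) ≠ 0)
  rw [show ((1:ℝ)/2)⁻¹ = 2 by norm_num] at hfin
  exact hfin.congr fun j => by rw [mul_inv, inv_inv, inv_inv]

/-- For every real `θ > 1`, `lim_{j → ∞} j · log (Φ_j(θ)) = 2`. -/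
theorem statement15 (θ : ℝ) (hθ : 1 < θ) :
    Tendsto (fun j : ℕ => (j : ℝ) * Real.log (Phi j θ)) atTop (𝓝 2) := by
  exact key (fun j => Real.log (Phi j θ)) (Real.log_pos hθ) (fun j => by simp [Phi])
end
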